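/- If S ⊆ ℝⁿ is open in the Euclidean topology, then the language L(S) of all base-r encodings of vectors of S is the intersection of an open set and a closed set in the prefix-distance topology on (Σ)^ω, where Σ = {0,…,r−1}ⁿ ∪ {⋆}; specifically L(S) = (L(S) ∪ V̄₊) \ V̄₊ where L(S) ∪ V̄₊ is open and V̄₊ (words with an invalid structure containing at least one separator) is open. -/

import Mathlib

/-- The alphabet `Σ = {0,…,r−1}ⁿ ∪ {⋆}`: `some s` is a digit vector,
`none` is the separator `⋆`. -/
abbrev Alph (n r : ℕ) := Option (Fin n → Fin r)

/-- A sign symbol: a digit vector all of whose components are `0` or `r−1`. -/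
def SignSym {n r : ℕ} (s : Fin n → Fin r) : Prop :=
  ∀ i, (s i : ℕ) = 0 ∨ (s i : ℕ) = r - 1

/-- The set `V = {0,r−1}ⁿ · (Σ\{⋆})* · {⋆} · (Σ\{⋆})^ω` of structurally
valid encodings: a sign symbol, then exactly one separator, at position ≥ 1. -/
def ValidEnc {n r : ℕ} : Set (ℕ → Alph n r) :=
  {w | (∃ s, w 0 = some s ∧ SignSym s) ∧
    ∃ k, 1 ≤ k ∧ w k = none ∧ ∀ j, j ≠ k → w j ≠ none}

/-- The set `V̄₊ = (({0,r−1}ⁿ·Σ*·{⋆}) ∪ (Σ\{0,r−1}ⁿ)) · Σ* · {⋆} · Σ^ω` of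
words containing at least one separator but not validly encoding a vector. -/
def VbarPlus {n r : ℕ} : Set (ℕ → Alph n r) :=
  {w | ∃ k, w k = none ∧
    ((∃ s, w 0 = some s ∧ SignSym s ∧ ∃ j, 1 ≤ j ∧ j < k ∧ w j = none) ∨
     ((¬ ∃ s, w 0 = some s ∧ SignSym s) ∧ 1 ≤ k))}

/-- Length of the longest common prefix of two distinct infinite words. -/
noncomputable def commonLen {A : Type*} (w w' : ℕ → A) : ℕ :=
  sInf {n | w n ≠ w' n}

/-- The prefix distance on infinite words. -/
noncomputable def wdist {A : Type*} (w w' : ℕ → A) : ℝ :=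
  letI := Classical.propDecidable (w = w')
  if w = w' then 0 else 1 / (commonLen w w' + 1)

/-- Openness in the prefix-distance topology on `Σ^ω`. -/
def IsOpenW {A : Type*} (U : Set (ℕ → A)) : Prop :=
  ∀ w ∈ U, ∃ ε : ℝ, 0 < ε ∧ ∀ w', wdist w w' < ε → w' ∈ U

/-- The real value, for component `j`, of the encoding with integer-part
length `k` given by integer digits `dI 0 … dI (k-1)` (most significant
first, `dI 0` the sign digit, r's complement for negatives) and fractional
digits `dF 0, dF 1, …`. -/
noncomputable def encVal {n r : ℕ} (k : ℕ)
    (dI dF : ℕ → Fin n → Fin r) (j : Fin n) : ℝ :=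
  (∑ i ∈ Finset.range k, ((dI i j : ℕ) : ℝ) * (r : ℝ) ^ (k - 1 - i)) -
    (if (dI 0 j : ℕ) = r - 1 then (r : ℝ) ^ k else 0) +
    ∑' i : ℕ, ((dF i j : ℕ) : ℝ) * (1 / (r : ℝ)) ^ (i + 1)

/-- The word `w` is a base-`r` encoding of the vector `x ∈ ℝⁿ`: it has the
form `w_I ⋆ w_F` with a sign prefix, and componentwise decodes to `x`. -/
def Encodes {n r : ℕ} (w : ℕ → Alph n r) (x : Fin n → ℝ) : Prop :=
  ∃ (k : ℕ) (dI dF : ℕ → Fin n → Fin r),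
    1 ≤ k ∧ SignSym (dI 0) ∧
    (∀ i, i < k → w i = some (dI i)) ∧ w k = none ∧
    (∀ i, w (k + 1 + i) = some (dF i)) ∧
    ∀ j, x j = encVal k dI dF j

/-- The language `L(S)` of all base-`r` encodings of vectors of `S ⊆ ℝⁿ`. -/
def LangOf {n r : ℕ} (S : Set (Fin n → ℝ)) : Set (ℕ → Alph n r) :=
  {w | ∃ x ∈ S, Encodes w x}

/-- If `S ⊆ ℝⁿ` is open in the Euclidean topology, then the language `L(S)`
of all its base-`r` encodings is the intersection of an open set and a
closed set in the prefix-distance topology on `Σ^ω`: specifically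
`L(S) = (L(S) ∪ V̄₊) \ V̄₊`, where `L(S) ∪ V̄₊` and `V̄₊` are open. -/
lemma agree_of_wdist_lt {A : Type*} {w w' : ℕ → A} {N : ℕ}
    (h : wdist w w' < 1 / (N + 1)) : ∀ m ≤ N, w m = w' m := by
  intro m hm
  by_cases he : w = w'
  · rw [he]
  · simp only [wdist] at h
    rw [if_neg he] at h
    have h2 : (0:ℝ) < (commonLen w w' : ℝ) + 1 := by positivity
    have hNL : (N:ℝ) + 1 < (commonLen w w' : ℝ) + 1 := by
      by_contra hc
      push_neg at hc
      have : 1 / ((commonLen w w' : ℝ) + 1) ≥ 1 / ((N:ℝ) + 1) := by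
        apply one_div_le_one_div_of_le (by positivity) hc
      linarith
    have hNL' : N < commonLen w w' := by
      have : (N:ℝ) < (commonLen w w' : ℝ) := by linarith
      exact_mod_cast this
    have hm' : m < sInf {n | w n ≠ w' n} := lt_of_le_of_lt hm hNL'
    have := Nat.notMem_of_lt_sInf hm'
    simpa using this

lemma vbar_open {n r : ℕ} : IsOpenW (VbarPlus (n := n) (r := r)) := by
  intro w hw
  obtain ⟨k, hk, hcase⟩ := hw
  refine ⟨1 / (k + 1), by positivity, ?_⟩
  intro w' hd
  have hag := agree_of_wdist_lt hd
  refine ⟨k, by rw [← hag k le_rfl]; exact hk, ?_⟩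
  rcases hcase with ⟨s, h0, hs, j, hj1, hjk, hjn⟩ | ⟨hns, hk1⟩
  · exact Or.inl ⟨s, by rw [← hag 0 (Nat.zero_le _)]; exact h0, hs,
      j, hj1, hjk, by rw [← hag j (le_of_lt hjk)]; exact hjn⟩
  · exact Or.inr ⟨by rw [← hag 0 (Nat.zero_le _)]; exact hns, hk1⟩

lemma summable_digits {n r : ℕ} (hr : 2 ≤ r) (d : ℕ → Fin n → Fin r) (j : Fin n) :
    Summable (fun i => ((d i j : ℕ) : ℝ) * (1 / (r : ℝ)) ^ (i + 1)) := by
  have hr0 : (0:ℝ) < r := by exact_mod_cast Nat.lt_of_lt_of_le (by norm_num) hr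
  have hq0 : (0:ℝ) ≤ 1 / r := by positivity
  have hq1 : (1:ℝ) / r < 1 := by
    rw [div_lt_one hr0]; exact_mod_cast Nat.lt_of_lt_of_le (by norm_num) hr
  apply Summable.of_nonneg_of_le (fun i => by positivity) (fun i => ?_)
    (summable_geometric_of_lt_one hq0 hq1)
  have hd : ((d i j : ℕ) : ℝ) ≤ r := by
    exact_mod_cast le_of_lt (d i j).isLt
  calc ((d i j : ℕ) : ℝ) * (1 / r) ^ (i + 1)
      ≤ (r : ℝ) * (1 / r) ^ (i + 1) := by
        apply mul_le_mul_of_nonneg_right hd (by positivity)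
    _ = (1 / r : ℝ) ^ i := by
        rw [pow_succ]; field_simp

set_option maxHeartbeats 1000000 in
lemma tsum_digit_diff_le {n r : ℕ} (hr : 2 ≤ r) (d d' : ℕ → Fin n → Fin r)
    (m : ℕ) (hag : ∀ i ≤ m, d i = d' i) (j : Fin n) :
    |(∑' i, ((d' i j : ℕ) : ℝ) * (1 / (r : ℝ)) ^ (i + 1)) -
      ∑' i, ((d i j : ℕ) : ℝ) * (1 / (r : ℝ)) ^ (i + 1)| ≤ (1 / 2) ^ m := by
  have hr0 : (0:ℝ) < r := by exact_mod_cast Nat.lt_of_lt_of_le (by norm_num) hr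
  have hr2 : (2:ℝ) ≤ r := by exact_mod_cast hr
  have hq0 : (0:ℝ) ≤ 1 / r := by positivity
  have hq1 : (1:ℝ) / r < 1 := by rw [div_lt_one hr0]; linarith
  have hqh : (1:ℝ) / r ≤ 1 / 2 := by
    apply one_div_le_one_div_of_le (by norm_num) hr2
  have hs := summable_digits hr d j
  have hs' := summable_digits hr d' j
  set f : ℕ → ℝ := fun i =>
    ((d' i j : ℕ) : ℝ) * (1 / (r : ℝ)) ^ (i + 1) -
      ((d i j : ℕ) : ℝ) * (1 / (r : ℝ)) ^ (i + 1) with hf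
  have hsf : Summable f := hs'.sub hs
  have habs : Summable (fun i => |f i|) := hsf.abs
  have hbound : ∀ i, |f i| ≤ (r : ℝ) * (1 / r) ^ (i + 1) := by
    intro i
    have h1 : (0:ℝ) ≤ ((d i j : ℕ) : ℝ) := by positivity
    have h2 : (0:ℝ) ≤ ((d' i j : ℕ) : ℝ) := by positivity
    have h3 : ((d i j : ℕ) : ℝ) ≤ r := by exact_mod_cast le_of_lt (d i j).isLt
    have h4 : ((d' i j : ℕ) : ℝ) ≤ r := by exact_mod_cast le_of_lt (d' i j).isLt
    have : f i = (((d' i j : ℕ) : ℝ) - ((d i j : ℕ) : ℝ)) * (1 / r) ^ (i + 1) := by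
      rw [hf]; ring
    rw [this, abs_mul, abs_pow, abs_div, abs_one]
    rw [abs_of_pos hr0]
    apply mul_le_mul_of_nonneg_right _ (by positivity)
    rw [abs_le]; constructor <;> linarith
  -- |tsum f| ≤ tsum |f|
  rw [← Summable.tsum_sub hs' hs]
  have h5 : |∑' i, f i| ≤ ∑' i, |f i| := by
    simpa [Real.norm_eq_abs] using norm_tsum_le_tsum_norm (f := f) (by simpa [Real.norm_eq_abs] using habs)
  refine le_trans h5 ?_
  -- split off first m+1 terms
  have hsplit := Summable.sum_add_tsum_nat_add (f := fun i => |f i|) (m + 1) habs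
  have hzero : ∑ i ∈ Finset.range (m + 1), |f i| = 0 := by
    apply Finset.sum_eq_zero
    intro i hi
    have : d i = d' i := hag i (by simpa [Nat.lt_succ_iff] using hi)
    simp [hf, this]
  have htail : ∀ i : ℕ, |f (i + (m + 1))| ≤ (1 / (r:ℝ)) ^ (m + 1) * (1 / r) ^ i := by
    intro i
    refine le_trans (hbound (i + (m + 1))) ?_
    have : (r : ℝ) * (1 / r) ^ (i + (m + 1) + 1) = (1 / r) ^ (m + 1) * (1 / r) ^ i := by
      rw [pow_succ]
      rw [show i + (m + 1) = m + 1 + i by ring, pow_add]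
      field_simp
    rw [this]
  have hsg : Summable (fun i : ℕ => (1 / (r:ℝ)) ^ (m + 1) * (1 / r) ^ i) :=
    (summable_geometric_of_lt_one hq0 hq1).mul_left _
  have h6 : (∑' i : ℕ, |f (i + (m + 1))|) ≤ (1 / (r:ℝ)) ^ (m + 1) * (1 - 1 / (r:ℝ))⁻¹ := by
    calc (∑' i : ℕ, |f (i + (m + 1))|)
        ≤ ∑' i : ℕ, (1 / (r:ℝ)) ^ (m + 1) * (1 / r) ^ i := by
          have hsum1 : Summable (fun i : ℕ => |f (i + (m + 1))|) :=
            (summable_nat_add_iff (m+1)).mpr habs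
          exact Summable.tsum_le_tsum htail hsum1 hsg
      _ = (1 / (r:ℝ)) ^ (m + 1) * (1 - 1 / (r:ℝ))⁻¹ := by
          rw [tsum_mul_left, tsum_geometric_of_lt_one hq0 hq1]
  have h7 : (∑' i, |f i|) = ∑' i : ℕ, |f (i + (m + 1))| := by
    rw [← hsplit, hzero, zero_add]
  rw [h7]
  refine le_trans h6 ?_
  have h8 : (1 / (r:ℝ)) ^ (m + 1) ≤ (1 / 2) ^ (m + 1) :=
    pow_le_pow_left₀ hq0 hqh _
  have h9 : (1 - 1 / (r:ℝ))⁻¹ ≤ 2 := by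
    rw [inv_le_comm₀ (by linarith) (by norm_num)]
    linarith
  calc (1 / (r:ℝ)) ^ (m + 1) * (1 - 1 / (r:ℝ))⁻¹
      ≤ (1 / 2 : ℝ) ^ (m + 1) * 2 := by
        apply mul_le_mul h8 h9 (inv_nonneg.mpr (by linarith)) (by positivity)
    _ = (1 / 2) ^ m := by rw [pow_succ]; ring

lemma encodes_none_unique {n r : ℕ} {w : ℕ → Alph n r} {k : ℕ}
    {dI dF : ℕ → Fin n → Fin r}
    (hI : ∀ i, i < k → w i = some (dI i)) (hF : ∀ i, w (k + 1 + i) = some (dF i)) :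
    ∀ i, w i = none → i = k := by
  intro i hi
  by_contra hne
  rcases Nat.lt_or_ge i k with h | h
  · rw [hI i h] at hi; exact Option.some_ne_none _ hi
  · have he : i = k + 1 + (i - (k + 1)) := by omega
    rw [he, hF] at hi; exact Option.some_ne_none _ hi

theorem langOf_open_inter_closed {n r : ℕ} (hn : 0 < n) (hr : 2 ≤ r)
    (S : Set (Fin n → ℝ)) (hS : IsOpen S) :
    IsOpenW (LangOf (r := r) S ∪ VbarPlus) ∧
    IsOpenW (VbarPlus (n := n) (r := r)) ∧
    LangOf (r := r) S = (LangOf (r := r) S ∪ VbarPlus) \ VbarPlus := by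
  have hdisj : ∀ w, w ∈ LangOf (r := r) S → w ∉ VbarPlus := by
    rintro w ⟨x, hx, k, dI, dF, hk1, hsign, hI, hk, hF, hval⟩ ⟨k₀, hk₀, hc⟩
    have hnone := encodes_none_unique hI hF
    have hkk := hnone k₀ hk₀
    rcases hc with ⟨s, h0, hs, j, hj1, hjk, hjn⟩ | ⟨hns, _⟩
    · have := hnone j hjn; omega
    · exact hns ⟨dI 0, hI 0 hk1, hsign⟩
  refine ⟨?_, vbar_open, ?_⟩
  · rintro w (hw | hw)
    · obtain ⟨x, hx, k, dI, dF, hk1, hsign, hI, hk, hF, hval⟩ := hw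
      obtain ⟨δ, hδ, hball⟩ := Metric.isOpen_iff.mp hS x hx
      obtain ⟨m, hm⟩ := exists_pow_lt_of_lt_one hδ (by norm_num : (1:ℝ)/2 < 1)
      set N := k + 1 + m with hN
      refine ⟨1 / (N + 1), by positivity, ?_⟩
      intro w' hd
      have hag := agree_of_wdist_lt hd
      have hnone := encodes_none_unique hI hF
      by_cases h2 : ∃ k', w' k' = none ∧ k' ≠ k
      · obtain ⟨k', hk', hne⟩ := h2
        have hgt : N < k' := by
          by_contra hle; push_neg at hle
          have : w k' = none := by rw [hag k' hle]; exact hk'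
          exact hne (hnone k' this)
        right
        refine ⟨k', hk', Or.inl ⟨dI 0, ?_, hsign, k, hk1, by omega, ?_⟩⟩
        · rw [← hag 0 (by omega)]; exact hI 0 hk1
        · rw [← hag k (by omega)]; exact hk
      · push_neg at h2
        have hne' : ∀ i, i ≠ k → w' i ≠ none := fun i hi h => hi (h2 i h)
        set dF' : ℕ → Fin n → Fin r := fun i => (w' (k + 1 + i)).getD (dF i) with hdF'
        have hF' : ∀ i, w' (k + 1 + i) = some (dF' i) := by
          intro i
          have hnn : w' (k + 1 + i) ≠ none := hne' _ (by omega)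
          obtain ⟨s, hs⟩ := Option.ne_none_iff_exists'.mp hnn
          rw [hdF']
          simp only [hs, Option.getD_some]
        have hagF : ∀ i, i ≤ m → dF i = dF' i := by
          intro i hi
          have ha : w (k + 1 + i) = w' (k + 1 + i) := hag _ (by omega)
          have h3 := hF' i
          rw [← ha, hF i] at h3
          exact Option.some_inj.mp h3
        left
        refine ⟨fun j => encVal k dI dF' j, ?_, k, dI, dF', hk1, hsign, ?_, ?_, hF',
          fun j => rfl⟩
        · apply hball
          rw [Metric.mem_ball, dist_pi_lt_iff hδ]
          intro j
          rw [Real.dist_eq]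
          have hxj := hval j
          have hdiff : encVal k dI dF' j - x j =
              (∑' i, ((dF' i j : ℕ) : ℝ) * (1 / (r : ℝ)) ^ (i + 1)) -
                ∑' i, ((dF i j : ℕ) : ℝ) * (1 / (r : ℝ)) ^ (i + 1) := by
            rw [hxj]; simp only [encVal]; ring
          rw [hdiff]
          exact lt_of_le_of_lt (tsum_digit_diff_le hr dF dF' m hagF j) hm
        · intro i hi; rw [← hag i (by omega)]; exact hI i hi
        · rw [← hag k (by omega)]; exact hk
    · obtain ⟨ε, hε, h⟩ := vbar_open w hw
      exact ⟨ε, hε, fun w' hd => Or.inr (h w' hd)⟩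
  · ext w
    constructor
    · intro h; exact ⟨Or.inl h, hdisj w h⟩
    · rintro ⟨h1 | h1, h2⟩
      · exact h1
      · exact absurd h1 h2
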